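/- Let g(s) = q^{(τ+1)s − τ − 1/2}. Then on V₊ the operator identity W₀ ∘ T_{1/(τ+1)} = (T_{1/(τ+1)} − M_g ∘ T_{−τ/(τ+1)}) ∘ W₀ holds, i.e. the initial value L₀^{1/(τ+1)} = W₀ ∘ T_{1/(τ+1)} ∘ W₀^{−1} of the fractional power of the Toda Lax operator equals (1 − q^{(τ+1)s − τ − 1/2} Λ^{−1}) Λ^{1/(τ+1)}. -/

import Mathlib

/-- `a_0 = 1`, `a_n = (−1)^n q^{n²/2} / ∏_{k=1}^n (1 − q^k)`, the coefficients of
`∏_{i=1}^∞ (1 − q^{i−1/2} x) = Σ_{n≥0} a_n x^n`. -/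
noncomputable def acoef (q : ℝ) (n : ℕ) : ℝ :=
  (-1) ^ n * q ^ (((n : ℝ) ^ 2) / 2) / ∏ k ∈ Finset.range n, (1 - q ^ (k + 1))

/-- The dressing operator
`(W₀ f)(s) = Σ_{n≥0} a_n q^{(τ+1) n (2s − n − 1)/2} f(s − n)`,
realizing `q^{(τ+1)(s−1/2)²/2} ∏_{i=1}^∞ (1 − q^{i−1/2} Λ^{−1}) q^{−(τ+1)(s−1/2)²/2}`;
on functions whose support is bounded below the sum has finitely many
nonzero terms. -/
noncomputable def W0 (q τ : ℝ) (f : ℝ → ℂ) : ℝ → ℂ := fun s =>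
  ∑ᶠ n : ℕ,
    ((acoef q n : ℝ) : ℂ) *
      ((q ^ ((τ + 1) * (n : ℝ) * (2 * s - (n : ℝ) - 1) / 2) : ℝ) : ℂ) *
      f (s - (n : ℝ))

lemma prod_ne (q : ℝ) (hq0 : 0 < q) (hq1 : q < 1) (n : ℕ) :
    ∏ k ∈ Finset.range n, (1 - q ^ (k + 1)) ≠ 0 := by
  apply Finset.prod_ne_zero_iff.mpr
  intro k _
  have : q ^ (k + 1) < 1 := pow_lt_one₀ hq0.le hq1 (Nat.succ_ne_zero k)
  linarith

lemma acoef_rec (q : ℝ) (hq0 : 0 < q) (hq1 : q < 1) (n : ℕ) :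
    acoef q (n + 1) * (1 - q ^ ((n : ℝ) + 1)) = -(q ^ ((n : ℝ) + 1/2)) * acoef q n := by
  have hpow : q ^ ((n : ℝ) + 1) = q ^ (n + 1) := by
    rw [← Real.rpow_natCast q (n + 1)]; push_cast; ring_nf
  have hne : (1 : ℝ) - q ^ (n + 1) ≠ 0 := by
    have : q ^ (n + 1) < 1 := pow_lt_one₀ hq0.le hq1 (Nat.succ_ne_zero n)
    linarith
  have hP := prod_ne q hq0 hq1 n
  have hexp : q ^ (((((n : ℕ) + 1 : ℕ) : ℝ)) ^ 2 / 2) = q ^ (((n : ℝ) ^ 2) / 2) * q ^ ((n : ℝ) + 1/2) := by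
    rw [← Real.rpow_add hq0]; push_cast; ring_nf
  unfold acoef
  rw [Finset.prod_range_succ, hpow, hexp]
  field_simp
  ring

lemma key (q τ : ℝ) (hq0 : 0 < q) (hq1 : q < 1) (hτ : τ + 1 ≠ 0) (m : ℕ) (s : ℝ) :
    acoef q (m+1) * q ^ ((τ+1) * ((m+1 : ℕ) : ℝ) * (2*(s+1/(τ+1)) - ((m+1 : ℕ) : ℝ) - 1)/2)
      - q ^ ((τ+1)*s - τ - 1/2) *
        (acoef q m * q ^ ((τ+1)*((m : ℕ) : ℝ)*(2*(s-τ/(τ+1)) - ((m : ℕ) : ℝ) - 1)/2))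
    = acoef q (m+1) * q ^ ((τ+1)*((m+1 : ℕ) : ℝ)*(2*s - ((m+1 : ℕ) : ℝ) - 1)/2) := by
  push_cast
  set E : ℝ := (τ+1)*((m : ℝ)+1)*(2*s - ((m : ℝ)+1) - 1)/2 with hE
  have h1 : (τ+1)*((m : ℝ)+1)*(2*(s+1/(τ+1)) - ((m : ℝ)+1) - 1)/2 = E + ((m : ℝ)+1) := by
    rw [hE]; field_simp; ring
  have h2 : ((τ+1)*s - τ - 1/2) + (τ+1)*(m : ℝ)*(2*(s-τ/(τ+1)) - (m : ℝ) - 1)/2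
      = E + ((m : ℝ)+1/2) := by
    rw [hE]; field_simp; ring
  have hrec := acoef_rec q hq0 hq1 m
  have h3 : q ^ ((τ+1)*s - τ - 1/2) * q ^ ((τ+1)*(m : ℝ)*(2*(s-τ/(τ+1)) - (m : ℝ) - 1)/2)
      = q ^ E * q ^ ((m : ℝ)+1/2) := by
    rw [← Real.rpow_add hq0, h2, Real.rpow_add hq0]
  calc acoef q (m+1) * q ^ ((τ+1)*((m : ℝ)+1)*(2*(s+1/(τ+1)) - ((m : ℝ)+1) - 1)/2)
        - q ^ ((τ+1)*s - τ - 1/2) *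
          (acoef q m * q ^ ((τ+1)*(m : ℝ)*(2*(s-τ/(τ+1)) - (m : ℝ) - 1)/2))
      = acoef q (m+1) * (q ^ E * q ^ ((m : ℝ)+1))
        - acoef q m * (q ^ E * q ^ ((m : ℝ)+1/2)) := by
        rw [h1, Real.rpow_add hq0]; linear_combination (-(acoef q m)) * h3
    _ = acoef q (m+1) * q ^ E := by linear_combination (-(q ^ E)) * hrec

/-- On `V₊` (functions with support bounded below),
`W₀ ∘ T_{1/(τ+1)} = (T_{1/(τ+1)} − M_g ∘ T_{−τ/(τ+1)}) ∘ W₀` with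
`g(s) = q^{(τ+1)s − τ − 1/2}`; i.e. the initial value of the fractional power
of the Toda Lax operator is
`L₀^{1/(τ+1)} = W₀ ∘ T_{1/(τ+1)} ∘ W₀^{−1} = (1 − q^{(τ+1)s − τ − 1/2} Λ^{−1}) Λ^{1/(τ+1)}`. -/
theorem L0_fractional_power_formula (q τ : ℝ) (hq0 : 0 < q) (hq1 : q < 1)
    (hτ : τ ≠ -1)
    (f : ℝ → ℂ) (hf : BddBelow (Function.support f)) (s : ℝ) :
    W0 q τ (fun t => f (t + 1 / (τ + 1))) s
      = W0 q τ f (s + 1 / (τ + 1)) -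
          ((q ^ ((τ + 1) * s - τ - 1/2) : ℝ) : ℂ) * W0 q τ f (s - τ / (τ + 1)) := by
  have hτ1 : τ + 1 ≠ 0 := fun h => hτ (by linarith)
  obtain ⟨M, hM⟩ := hf
  obtain ⟨N, hN⟩ := exists_nat_gt (s + 1 / (τ + 1) - M)
  simp only [W0]
  set T : ℕ → ℂ := fun n =>
    ((acoef q n : ℝ) : ℂ) *
      ((q ^ ((τ + 1) * (n : ℝ) * (2 * s - (n : ℝ) - 1) / 2) : ℝ) : ℂ) *
      f (s - (n : ℝ) + 1 / (τ + 1)) with hTdef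
  set U : ℕ → ℂ := fun n =>
    ((acoef q n : ℝ) : ℂ) *
      ((q ^ ((τ + 1) * (n : ℝ) * (2 * (s + 1 / (τ + 1)) - (n : ℝ) - 1) / 2) : ℝ) : ℂ) *
      f (s + 1 / (τ + 1) - (n : ℝ)) with hUdef
  set V : ℕ → ℂ := fun n =>
    ((acoef q n : ℝ) : ℂ) *
      ((q ^ ((τ + 1) * (n : ℝ) * (2 * (s - τ / (τ + 1)) - (n : ℝ) - 1) / 2) : ℝ) : ℂ) *
      f (s - τ / (τ + 1) - (n : ℝ)) with hVdef
  have hT : Function.support T ⊆ ↑(Finset.range (N + 1)) := by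
    intro n hn
    have hfne : f (s - (n : ℝ) + 1 / (τ + 1)) ≠ 0 := by
      intro h
      apply hn
      simp only [hTdef, h, mul_zero]
    have hle : M ≤ s - (n : ℝ) + 1 / (τ + 1) := hM (Function.mem_support.mpr hfne)
    have : (n : ℝ) < N := by linarith
    have : n < N := by exact_mod_cast this
    simp only [Finset.coe_range, Set.mem_Iio]
    omega
  have hU : Function.support U ⊆ ↑(Finset.range (N + 1)) := by
    intro n hn
    have hfne : f (s + 1 / (τ + 1) - (n : ℝ)) ≠ 0 := by
      intro h
      apply hn
      simp only [hUdef, h, mul_zero]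
    have hle : M ≤ s + 1 / (τ + 1) - (n : ℝ) := hM (Function.mem_support.mpr hfne)
    have : (n : ℝ) < N := by linarith
    have : n < N := by exact_mod_cast this
    simp only [Finset.coe_range, Set.mem_Iio]
    omega
  have harg : s - τ / (τ + 1) = s + 1 / (τ + 1) - 1 := by field_simp; ring
  have hV : Function.support V ⊆ ↑(Finset.range N) := by
    intro n hn
    have hfne : f (s - τ / (τ + 1) - (n : ℝ)) ≠ 0 := by
      intro h
      apply hn
      simp only [hVdef, h, mul_zero]
    have hle : M ≤ s - τ / (τ + 1) - (n : ℝ) := hM (Function.mem_support.mpr hfne)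
    rw [harg] at hle
    have : (n : ℝ) < N := by linarith
    have : n < N := by exact_mod_cast this
    simp only [Finset.coe_range, Set.mem_Iio]
    omega
  rw [finsum_eq_sum_of_support_subset T hT, finsum_eq_sum_of_support_subset U hU,
    finsum_eq_sum_of_support_subset V hV]
  set c : ℂ := ((q ^ ((τ + 1) * s - τ - 1/2) : ℝ) : ℂ) with hcdef
  set D : ℕ → ℂ := fun n => match n with
    | 0 => 0
    | Nat.succ k => c * V k
    with hDdef
  have hDsum : c * ∑ n ∈ Finset.range N, V n = ∑ n ∈ Finset.range (N + 1), D n := by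
    rw [Finset.sum_range_succ' D, Finset.mul_sum]
    simp [hDdef]
  rw [hDsum, ← Finset.sum_sub_distrib]
  apply Finset.sum_congr rfl
  intro n _
  match n with
  | 0 =>
    simp only [hTdef, hUdef, hDdef, Nat.cast_zero]
    norm_num
  | Nat.succ k =>
    simp only [hTdef, hUdef, hVdef, hDdef]
    have harg1 : s - ((k + 1 : ℕ) : ℝ) + 1 / (τ + 1) = s + 1 / (τ + 1) - ((k + 1 : ℕ) : ℝ) := by
      ring
    have harg2 : s - τ / (τ + 1) - (k : ℝ) = s + 1 / (τ + 1) - ((k + 1 : ℕ) : ℝ) := by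
      rw [harg]; push_cast; ring
    rw [harg1, harg2]
    have hkey := key q τ hq0 hq1 hτ1 k s
    have hC : ((acoef q (k+1) : ℝ) : ℂ) *
          ((q ^ ((τ + 1) * ((k + 1 : ℕ) : ℝ) * (2 * (s + 1 / (τ + 1)) - ((k + 1 : ℕ) : ℝ) - 1) / 2) : ℝ) : ℂ)
        - c * (((acoef q k : ℝ) : ℂ) *
          ((q ^ ((τ + 1) * ((k : ℕ) : ℝ) * (2 * (s - τ / (τ + 1)) - ((k : ℕ) : ℝ) - 1) / 2) : ℝ) : ℂ))
        = ((acoef q (k+1) : ℝ) : ℂ) *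
          ((q ^ ((τ + 1) * ((k + 1 : ℕ) : ℝ) * (2 * s - ((k + 1 : ℕ) : ℝ) - 1) / 2) : ℝ) : ℂ) := by
      rw [hcdef]
      exact_mod_cast hkey
    linear_combination (-(f (s + 1 / (τ + 1) - ((k + 1 : ℕ) : ℝ)))) * hC
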